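/- In a label-setting shortest path computation, suppose whenever a node j is made permanent, D(j) ≤ D(i) + b(i,j) holds for every non-permanent node i, where D are the maintained upper bounds, D(j) equals the shortest path distance restricted to permanent nodes plus one final arc, and b is the bottleneck cost. Then at termination D(j) = d(j) for all nodes j, the true shortest path distances. -/

import Mathlib

open scoped Classical

variable {V : Type*}

/-- `IsWalk A u v l`: `u :: l` is a directed walk from `u` to `v` in the digraph with
arc relation `A`. -/
def IsWalk (A : V → V → Prop) (u v : V) (l : List V) : Prop :=
  List.Chain A u l ∧ (u :: l).getLast (List.cons_ne_nil u l) = v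

/-- The list of arcs of the walk `u :: l`. -/
def walkArcs (u : V) (l : List V) : List (V × V) := (u :: l).zip l

/-- The cost of a walk: the sum of the costs of its arcs. -/
noncomputable def walkCost (c : V → V → ℝ) (u : V) (l : List V) : ℝ :=
  ((walkArcs u l).map fun e => c e.1 e.2).sum

/-- A (simple) directed cycle through the arc `(x, y)`: the arc `(x, y)` together with a
walk from `y` back to `x` visiting pairwise distinct nodes. -/
def IsCycleThrough (A : V → V → Prop) (x y : V) (l : List V) : Prop :=
  A x y ∧ IsWalk A y x l ∧ (y :: l).Nodup

/-- The arcs of the cycle through `(x, y)` given by the return walk `y :: l`. -/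
def cycleArcs (x y : V) (l : List V) : List (V × V) := (x, y) :: walkArcs y l

/-- `G = (V, A, c)` is `ξ`-min-balanced: every arc lies on a directed cycle all of whose
arcs have cost at most `ξ` times the cost of the given arc. -/
def MinBalanced (A : V → V → Prop) (c : V → V → ℝ) (ξ : ℝ) : Prop :=
  ∀ x y, A x y → ∃ l, IsCycleThrough A x y l ∧
    ∀ f ∈ cycleArcs x y l, c f.1 f.2 ≤ ξ * c x y

/-- A digraph is strongly connected if there is a directed walk between any two nodes. -/
def StronglyConnected (A : V → V → Prop) : Prop := ∀ u v : V, ∃ l, IsWalk A u v l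

/-- The bottleneck cost `b(i,j)`: the least `t` such that there is a directed `i`–`j`
walk all of whose arcs have cost at most `t`. -/
noncomputable def bottleneck (A : V → V → Prop) (c : V → V → ℝ) (i j : V) : ℝ :=
  sInf {t | ∃ l, IsWalk A i j l ∧ ∀ f ∈ walkArcs i l, c f.1 f.2 ≤ t}

/-- The balance value `β(e)` of the arc `e = (x, y)`: the smallest `r` such that there is
a directed cycle through `e` all of whose arcs have cost at most `r`. -/
noncomputable def balanceValue (A : V → V → Prop) (c : V → V → ℝ) (x y : V) : ℝ :=
  sInf {r | ∃ l, IsCycleThrough A x y l ∧ ∀ f ∈ cycleArcs x y l, c f.1 f.2 ≤ r}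

open scoped ENNReal

/-- The (extended-real-valued) cost of a walk. -/
noncomputable def ewalkCost (c : V → V → ℝ≥0∞) (u : V) (l : List V) : ℝ≥0∞ :=
  ((walkArcs u l).map fun e => c e.1 e.2).sum

/-- The shortest-walk distance from `s` to `j` among walks all of whose nodes other than
the terminal node `j` lie in the set `S` (it is `∞` if no such walk exists). -/
noncomputable def restrictedDist (A : V → V → Prop) (c : V → V → ℝ≥0∞) (S : Set V)
    (s j : V) : ℝ≥0∞ :=
  ⨅ l : {l : List V // IsWalk A s j l ∧ ∀ x ∈ (s :: l).dropLast, x ∈ S},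
    ewalkCost c s (l : List V)

/-- The (extended-real-valued) bottleneck cost. -/
noncomputable def ebottleneck (A : V → V → Prop) (c : V → V → ℝ≥0∞) (i j : V) : ℝ≥0∞ :=
  sInf {t | ∃ l, IsWalk A i j l ∧ ∀ f ∈ walkArcs i l, c f.1 f.2 ≤ t}

lemma isWalk_iff (A : V → V → Prop) (u v : V) (l : List V) :
    IsWalk A u v l ↔ List.Chain A u l ∧ (u :: l).getLast? = some v := by
  unfold IsWalk
  rw [List.getLast?_eq_getLast (List.cons_ne_nil u l)]
  simp

lemma walkArcs_cons (u h : V) (t : List V) :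
    walkArcs u (h :: t) = (u, h) :: walkArcs h t := rfl

lemma walkArcs_split (u x : V) (a b : List V) :
    walkArcs u (a ++ x :: b) = walkArcs u (a ++ [x]) ++ walkArcs x b := by
  induction a generalizing u with
  | nil => simp [walkArcs_cons, walkArcs]
  | cons h t ih => simp only [List.cons_append, walkArcs_cons, ih, List.nil_append]

lemma ewalkCost_split (c : V → V → ℝ≥0∞) (u x : V) (a b : List V) :
    ewalkCost c u (a ++ x :: b) = ewalkCost c u (a ++ [x]) + ewalkCost c x b := by
  unfold ewalkCost
  rw [walkArcs_split, List.map_append, List.sum_append]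

lemma ebottleneck_le (A : V → V → Prop) (c : V → V → ℝ≥0∞) (i j : V) (l : List V)
    (hl : IsWalk A i j l) : ebottleneck A c i j ≤ ewalkCost c i l := by
  refine sInf_le ⟨l, hl, fun f hf => ?_⟩
  exact List.single_le_sum (fun x _ => zero_le) _ (List.mem_map_of_mem hf)

lemma restrictedDist_le (A : V → V → Prop) (c : V → V → ℝ≥0∞) (S : Set V) (s j : V)
    (l : List V) (hl : IsWalk A s j l) (hS : ∀ x ∈ (s :: l).dropLast, x ∈ S) :
    restrictedDist A c S s j ≤ ewalkCost c s l :=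
  iInf_le _ (⟨l, hl, hS⟩ : {l : List V // IsWalk A s j l ∧ ∀ x ∈ (s :: l).dropLast, x ∈ S})

/-- (Dinitz's criterion.) In a label-setting shortest path computation
with source `s`, nodes are made permanent at times `order : V → ℕ` (with `s` first), and
the label of a node `j` equals the shortest-walk distance using only nodes permanent
before `j` as intermediate nodes. If whenever `j` is made permanent,
`D(j) ≤ D(i) + b(i,j)` holds for every node `i` that is not yet permanent (where `D(i)`
is `i`'s current label), then at termination `D(j) = d(j)`, the true shortest path
distance, for every node `j`. -/
theorem label_setting_correctness [Fintype V] (A : V → V → Prop) (c : V → V → ℝ≥0∞)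
    (s : V) (order : V → ℕ) (hinj : Function.Injective order)
    (hs : ∀ x, x ≠ s → order s < order x)
    (D : V → ℝ≥0∞)
    (hD : ∀ j, D j = restrictedDist A c {x | order x < order j} s j)
    (hDinitz : ∀ i j : V, order j < order i →
      D j ≤ restrictedDist A c {x | order x < order j} s i + ebottleneck A c i j) :
    ∀ j, D j = restrictedDist A c Set.univ s j := by
  have key : ∀ j (l : List V), IsWalk A s j l → D j ≤ ewalkCost c s l := by
    intro j l hl
    by_cases hjs : j = s
    · have h0 : D j ≤ 0 := by
        rw [hD]
        refine le_trans (restrictedDist_le A c _ s j []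
          ⟨List.Chain.nil, by simp [hjs]⟩ (by simp)) ?_
        simp [ewalkCost, walkArcs]
      exact le_trans h0 zero_le
    · set p : V → Bool := fun x => decide (order x < order j) with hp
      by_cases hall : ∀ x ∈ (s :: l).dropLast, order x < order j
      · rw [hD]; exact restrictedDist_le A c _ s j l hl hall
      · push_neg at hall
        obtain ⟨x₀, hx₀mem, hx₀⟩ := hall
        have hdw : (s :: l).dropWhile p ≠ [] := by
          intro hnil
          have hmem : ∀ x ∈ (s :: l), p x := by
            intro x hx
            have h1 := List.takeWhile_append_dropWhile (p := p) (l := s :: l)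
            rw [hnil, List.append_nil] at h1
            exact List.mem_takeWhile_imp (h1 ▸ hx)
          have := hmem x₀ (List.dropLast_subset _ hx₀mem)
          simp [hp] at this
          omega
        obtain ⟨i, Q, hiQ⟩ := List.exists_cons_of_ne_nil hdw
        have hsplit : (s :: l).takeWhile p ++ i :: Q = s :: l := by
          rw [← hiQ]; exact List.takeWhile_append_dropWhile
        have hips : p i = false := by
          have h := List.head_dropWhile_not p hdw
          have h2 : (List.dropWhile p (s :: l)).head hdw = i := by
            simp only [hiQ, List.head_cons]
          rwa [h2] at h
        have hsp : p s = true := by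
          simp only [hp, decide_eq_true_eq]
          exact hs j hjs
        have htw : (s :: l).takeWhile p = s :: l.takeWhile p := by
          simp [List.takeWhile_cons, hsp]
        set P : List V := l.takeWhile p with hP
        have hlP : l = P ++ i :: Q := by
          have h2 := hsplit
          rw [htw, List.cons_append] at h2
          injection h2 with _ h3
          exact h3.symm
        have hchain : List.Chain A s (P ++ [i]) ∧ List.Chain A i Q := by
          have := hl.1
          rw [hlP, List.Chain, List.isChain_cons_split] at this
          exact this
        have hlast? : ((s :: P) ++ i :: Q).getLast? = some j := by
          have := ((isWalk_iff A s j l).mp hl).2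
          rw [hlP] at this
          simpa using this
        have hlastQ : (i :: Q).getLast? = some j := by
          rwa [List.getLast?_append_of_ne_nil _ (List.cons_ne_nil i Q)] at hlast?
        have hwalkpre : IsWalk A s i (P ++ [i]) := by
          rw [isWalk_iff]
          refine ⟨hchain.1, ?_⟩
          rw [show s :: (P ++ [i]) = (s :: P) ++ [i] by simp]
          exact List.getLast?_concat
        have hpreS : ∀ x ∈ (s :: (P ++ [i])).dropLast, x ∈ {x | order x < order j} := by
          intro x hx
          rw [show s :: (P ++ [i]) = (s :: P) ++ [i] by simp, List.dropLast_concat] at hx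
          rcases List.mem_cons.mp hx with rfl | hx2
          · exact hs j hjs
          · have hx3 : x ∈ l.takeWhile p := by rwa [hP] at hx2
            have := List.mem_takeWhile_imp hx3
            simpa [hp] using this
        have hpre : restrictedDist A c {x | order x < order j} s i ≤ ewalkCost c s (P ++ [i]) :=
          restrictedDist_le A c _ s i (P ++ [i]) hwalkpre hpreS
        have hwalksuf : IsWalk A i j Q := (isWalk_iff A i j Q).mpr ⟨hchain.2, hlastQ⟩
        have hcost : ewalkCost c s l = ewalkCost c s (P ++ [i]) + ewalkCost c i Q := by
          rw [hlP]; exact ewalkCost_split c s i P Q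
        by_cases hij : i = j
        · subst hij
          rw [hD, hcost]
          exact le_trans hpre le_self_add
        · have hoi : order j < order i := by
            have h1 : ¬ order i < order j := by
              simpa [hp] using hips
            have h2 : order i ≠ order j := fun h => hij (hinj h)
            omega
          calc D j ≤ restrictedDist A c {x | order x < order j} s i + ebottleneck A c i j :=
                hDinitz i j hoi
            _ ≤ ewalkCost c s (P ++ [i]) + ewalkCost c i Q :=
                add_le_add hpre (ebottleneck_le A c i j Q hwalksuf)
            _ = ewalkCost c s l := hcost.symm
  intro j
  apply le_antisymm
  · exact le_iInf fun ⟨l, hl, _⟩ => key j l hl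
  · rw [hD]
    exact le_iInf fun ⟨l, hl, hS⟩ =>
      restrictedDist_le A c Set.univ s j l hl (fun x _ => Set.mem_univ x)
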